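/- Let 0 < c₂ < c₁ < 1 with c₁ + c₂ < 1, and set d_r = c₁ + c₂ − 2c₁c₂ + 2√(c₁c₂(1−c₁)(1−c₂)), d_ℓ = c₁ + c₂ − 2c₁c₂ − 2√(c₁c₂(1−c₁)(1−c₂)), t_c = √((c₁c₂ + √(c₁c₂(1−c₁)(1−c₂)))/(1 − c₁ − c₂)), and r_c = (c₁c₂ + √(c₁c₂(1−c₁)(1−c₂))) / ((1−c₁)(1−c₂) + √(c₁c₂(1−c₁)(1−c₂))). For t > 0 define γ(t) = (1 + t^{−2}c₁)(1 + t^{−2}c₂)/(1 + t^{−2}). Then: (a) γ(t) ≥ d_r for all t > 0, with equality if and only if t = t_c; (b) if t ≥ t_c then γ(t) − (c₁ + c₂) − 2c₁c₂ t^{−2} ≥ 0 and γ(t) satisfies γ − (c₁+c₂) − √((γ − d_ℓ)(γ − d_r)) = 2c₁c₂ t^{−2}; (c) γ(t) < 1 if and only if t > √(c₁c₂/(1 − c₁ − c₂)), and t_c > √(c₁c₂/(1 − c₁ − c₂)); (d) writing r = t²/(1 + t²), one has γ(t) = r(1 − c₁ + c₁ r^{−1})(1 − c₂ + c₂ r^{−1}),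 and r_c = t_c²/(1 + t_c²); in particular, since t ↦ t²/(1+t²) is strictly increasing on [0, ∞), r > r_c implies t > t_c and hence γ(t) > d_r. -/

import Mathlib

noncomputable section

set_option maxHeartbeats 1000000 in
/-- elementary properties of `γ(t) = (1+t⁻²c₁)(1+t⁻²c₂)/(1+t⁻²)`,
the threshold `t_c` and the critical value `r_c`. -/
theorem stmt18 (c₁ c₂ : ℝ)
    (hc₂ : 0 < c₂) (hc₂₁ : c₂ < c₁) (hc₁ : c₁ < 1) (hc : c₁ + c₂ < 1)
    (dr dl tc rc : ℝ)
    (hdr : dr = c₁ + c₂ - 2*c₁*c₂ + 2*Real.sqrt (c₁*c₂*(1-c₁)*(1-c₂)))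
    (hdl : dl = c₁ + c₂ - 2*c₁*c₂ - 2*Real.sqrt (c₁*c₂*(1-c₁)*(1-c₂)))
    (htc : tc = Real.sqrt ((c₁*c₂ + Real.sqrt (c₁*c₂*(1-c₁)*(1-c₂))) / (1 - c₁ - c₂)))
    (hrc : rc = (c₁*c₂ + Real.sqrt (c₁*c₂*(1-c₁)*(1-c₂))) /
      ((1-c₁)*(1-c₂) + Real.sqrt (c₁*c₂*(1-c₁)*(1-c₂))))
    (γ : ℝ → ℝ)
    (hγ : ∀ t, γ t = (1 + (t^2)⁻¹*c₁) * (1 + (t^2)⁻¹*c₂) / (1 + (t^2)⁻¹)) :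
    -- (a)
    (∀ t, 0 < t → dr ≤ γ t ∧ (γ t = dr ↔ t = tc)) ∧
    -- (b)
    (∀ t, 0 < t → tc ≤ t →
      0 ≤ γ t - (c₁ + c₂) - 2*c₁*c₂*(t^2)⁻¹ ∧
      γ t - (c₁ + c₂) - Real.sqrt ((γ t - dl) * (γ t - dr)) = 2*c₁*c₂*(t^2)⁻¹) ∧
    -- (c)
    ((∀ t, 0 < t → (γ t < 1 ↔ Real.sqrt (c₁*c₂/(1 - c₁ - c₂)) < t)) ∧
      Real.sqrt (c₁*c₂/(1 - c₁ - c₂)) < tc) ∧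
    -- (d)
    ((∀ t, 0 < t →
        γ t = (t^2/(1+t^2)) * (1 - c₁ + c₁ / (t^2/(1+t^2))) * (1 - c₂ + c₂ / (t^2/(1+t^2)))) ∧
      rc = tc^2 / (1 + tc^2) ∧
      StrictMonoOn (fun t : ℝ => t^2/(1+t^2)) (Set.Ici 0) ∧
      (∀ t, 0 < t → rc < t^2/(1+t^2) → tc < t ∧ dr < γ t)) := by
  have hc₁0 : 0 < c₁ := hc₂.trans hc₂₁
  have h1c₁ : 0 < 1 - c₁ := by linarith
  have h1c₂ : 0 < 1 - c₂ := by linarith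
  have hD : 0 < 1 - c₁ - c₂ := by linarith
  have hP : 0 < c₁ * c₂ := mul_pos hc₁0 hc₂
  set S := Real.sqrt (c₁*c₂*(1-c₁)*(1-c₂)) with hSdef
  have hprodpos : 0 < c₁*c₂*(1-c₁)*(1-c₂) := by positivity
  have hS : 0 < S := Real.sqrt_pos.2 hprodpos
  have hS2 : S^2 = c₁*c₂*(1-c₁)*(1-c₂) := Real.sq_sqrt hprodpos.le
  clear_value S
  have hSP : c₁*c₂ < S := by nlinarith [mul_pos hP hD]
  have hPS : 0 < c₁*c₂ + S := by linarith
  have htc2 : tc^2 = (c₁*c₂ + S)/(1-c₁-c₂) := by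
    rw [htc]; exact Real.sq_sqrt (le_of_lt (div_pos hPS hD))
  have htcpos : 0 < tc := by
    rw [htc]; exact Real.sqrt_pos.2 (div_pos hPS hD)
  have hsig : c₁*c₂ * (tc^2)⁻¹ = S - c₁*c₂ := by
    rw [htc2, inv_div, ← mul_div_assoc, div_eq_iff hPS.ne']
    linear_combination -hS2
  -- γ multiplied out
  have hγmul : ∀ t : ℝ, 0 < t →
      γ t * (1 + (t^2)⁻¹) = (1 + (t^2)⁻¹*c₁) * (1 + (t^2)⁻¹*c₂) := by
    intro t ht
    have h1t : (1 + (t^2)⁻¹) ≠ 0 := by positivity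
    rw [hγ, div_mul_cancel₀ _ h1t]
  -- key polynomial identities
  have hkeyA : ∀ t : ℝ, 0 < t →
      (γ t - dr) * ((1 + (t^2)⁻¹) * (c₁*c₂)) = (c₁*c₂*(t^2)⁻¹ - S + c₁*c₂)^2 := by
    intro t ht
    have h := hγmul t ht
    rw [hdr]
    linear_combination (c₁*c₂) * h - hS2
  have hkeyB : ∀ t : ℝ, 0 < t →
      (γ t - dl) * ((1 + (t^2)⁻¹) * (c₁*c₂)) = (c₁*c₂*(t^2)⁻¹ + S + c₁*c₂)^2 := by
    intro t ht
    have h := hγmul t ht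
    rw [hdl]
    linear_combination (c₁*c₂) * h - hS2
  have hkeyC : ∀ t : ℝ, 0 < t →
      (γ t - (c₁ + c₂) - 2*c₁*c₂*(t^2)⁻¹) * ((1 + (t^2)⁻¹) * (c₁*c₂)) =
        (S - c₁*c₂ - c₁*c₂*(t^2)⁻¹) * (S + c₁*c₂ + c₁*c₂*(t^2)⁻¹) := by
    intro t ht
    have h := hγmul t ht
    linear_combination (c₁*c₂) * h - hS2
  -- part (a)
  have parta : ∀ t, 0 < t → dr ≤ γ t ∧ (γ t = dr ↔ t = tc) := by
    intro t ht
    have hs : 0 < (t^2)⁻¹ := by positivity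
    have h1s : (0:ℝ) < 1 + (t^2)⁻¹ := by linarith
    have hQ : 0 < (1 + (t^2)⁻¹) * (c₁*c₂) := mul_pos h1s hP
    have hA := hkeyA t ht
    refine ⟨?_, ?_, ?_⟩
    · nlinarith [sq_nonneg (c₁*c₂*(t^2)⁻¹ - S + c₁*c₂)]
    · intro he
      have h0 : (c₁*c₂*(t^2)⁻¹ - S + c₁*c₂)^2 = 0 := by
        rw [← hA, he]; ring
      have h0' : c₁*c₂*(t^2)⁻¹ - S + c₁*c₂ = 0 := by
        exact pow_eq_zero_iff (n := 2) (by norm_num) |>.1 h0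
      have heq : c₁*c₂*(t^2)⁻¹ = c₁*c₂*(tc^2)⁻¹ := by rw [hsig]; linarith
      have heq2 : (t^2)⁻¹ = (tc^2)⁻¹ := mul_left_cancel₀ hP.ne' heq
      have heq3 : t^2 = tc^2 := inv_injective heq2
      calc t = Real.sqrt (t^2) := (Real.sqrt_sq ht.le).symm
        _ = Real.sqrt (tc^2) := by rw [heq3]
        _ = tc := Real.sqrt_sq htcpos.le
    · intro he
      subst he
      have h0 : c₁*c₂*(t^2)⁻¹ - S + c₁*c₂ = 0 := by linarith [hsig]
      have : (γ t - dr) * ((1 + (t^2)⁻¹) * (c₁*c₂)) = 0 := by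
        rw [hA, h0]; ring
      rcases mul_eq_zero.1 this with h | h
      · linarith
      · exact absurd h hQ.ne'
  refine ⟨parta, ?_, ?_, ?_⟩
  -- part (b)
  · intro t ht htt
    have hs : 0 < (t^2)⁻¹ := by positivity
    have h1s : (0:ℝ) < 1 + (t^2)⁻¹ := by linarith
    have hQ : 0 < (1 + (t^2)⁻¹) * (c₁*c₂) := mul_pos h1s hP
    have hA := hkeyA t ht
    have hB := hkeyB t ht
    have hC := hkeyC t ht
    -- s ≤ tc⁻²
    have hmono : tc^2 ≤ t^2 := by nlinarith
    have hsle : (t^2)⁻¹ ≤ (tc^2)⁻¹ := by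
      apply inv_anti₀ (by positivity) hmono
    have hX1 : 0 ≤ S - c₁*c₂ - c₁*c₂*(t^2)⁻¹ := by
      have := mul_le_mul_of_nonneg_left hsle hP.le
      linarith [hsig]
    have hX2 : 0 < S + c₁*c₂ + c₁*c₂*(t^2)⁻¹ := by
      have := mul_pos hP hs
      linarith
    constructor
    · nlinarith [mul_nonneg hX1 hX2.le]
    · have e1 : γ t - dr = (c₁*c₂*(t^2)⁻¹ - S + c₁*c₂)^2 / ((1 + (t^2)⁻¹) * (c₁*c₂)) := by
        rw [eq_div_iff hQ.ne']; linarith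
      have e2 : γ t - dl = (c₁*c₂*(t^2)⁻¹ + S + c₁*c₂)^2 / ((1 + (t^2)⁻¹) * (c₁*c₂)) := by
        rw [eq_div_iff hQ.ne']; linarith
      have e3 : (γ t - dl) * (γ t - dr) =
          ((S - c₁*c₂ - c₁*c₂*(t^2)⁻¹) * (S + c₁*c₂ + c₁*c₂*(t^2)⁻¹)
            / ((1 + (t^2)⁻¹) * (c₁*c₂)))^2 := by
        rw [e1, e2]; ring
      rw [e3, Real.sqrt_sq (div_nonneg (mul_nonneg hX1 hX2.le) hQ.le)]
      have e4 : (S - c₁*c₂ - c₁*c₂*(t^2)⁻¹) * (S + c₁*c₂ + c₁*c₂*(t^2)⁻¹)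
          / ((1 + (t^2)⁻¹) * (c₁*c₂)) = γ t - (c₁ + c₂) - 2*c₁*c₂*(t^2)⁻¹ := by
        rw [div_eq_iff hQ.ne']; linarith
      rw [e4]; ring
  -- part (c)
  · constructor
    · intro t ht
      have hs : 0 < (t^2)⁻¹ := by positivity
      have h1s : (0:ℝ) < 1 + (t^2)⁻¹ := by linarith
      have hm := hγmul t ht
      have ht2 : (0:ℝ) < t^2 := by positivity
      have hst : (t^2)⁻¹ * t^2 = 1 := inv_mul_cancel₀ ht2.ne'
      have hγlt : γ t < 1 ↔ c₁*c₂*(t^2)⁻¹ < 1-c₁-c₂ := by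
        rw [← mul_lt_mul_iff_left₀ h1s, hm, one_mul]
        constructor
        · intro h; nlinarith
        · intro h; nlinarith
      rw [hγlt, Real.sqrt_lt' ht, div_lt_iff₀ hD]
      constructor
      · intro h
        have := mul_lt_mul_of_pos_right h ht2
        have h2 : c₁*c₂*(t^2)⁻¹*t^2 = c₁*c₂ := by
          rw [mul_assoc, hst, mul_one]
        linarith
      · intro h
        have := mul_lt_mul_of_pos_right h (show (0:ℝ) < (t^2)⁻¹ by positivity)
        have h2 : t^2*(1-c₁-c₂)*(t^2)⁻¹ = 1-c₁-c₂ := by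
          field_simp
        linarith
    · rw [Real.sqrt_lt' htcpos, htc2, div_lt_div_iff₀ hD hD]
      nlinarith [mul_pos hS hD]
  -- part (d)
  · have hd1 : ∀ t, 0 < t →
        γ t = (t^2/(1+t^2)) * (1 - c₁ + c₁ / (t^2/(1+t^2))) * (1 - c₂ + c₂ / (t^2/(1+t^2))) := by
      intro t ht
      have ht2 : (0:ℝ) < t^2 := by positivity
      have h1t2 : (0:ℝ) < 1 + t^2 := by positivity
      have h1 : (t^2) ≠ 0 := by positivity
      have h2 : (1+t^2) ≠ 0 := by positivity
      have h3 : (1 + (t^2)⁻¹) ≠ 0 := by positivity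
      rw [hγ]
      field_simp
      ring
    have hd2 : rc = tc^2 / (1 + tc^2) := by
      have hden : ((1-c₁)*(1-c₂) + S) ≠ 0 := by
        have := mul_pos h1c₁ h1c₂
        intro h; linarith
      have hden2 : (1 + (c₁*c₂ + S)/(1-c₁-c₂)) ≠ 0 := by
        have := div_pos hPS hD
        intro h; linarith
      rw [hrc, htc2, div_eq_div_iff hden hden2]
      field_simp [hD.ne']
      ring
    have hd3 : StrictMonoOn (fun t : ℝ => t^2/(1+t^2)) (Set.Ici 0) := by
      intro a ha b hb hab
      simp only [Set.mem_Ici] at ha hb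
      dsimp only
      rw [div_lt_div_iff₀ (by positivity) (by positivity)]
      nlinarith [mul_pos (sub_pos.2 hab) (show (0:ℝ) < b + a by linarith)]
    refine ⟨hd1, hd2, hd3, ?_⟩
    intro t ht hrt
    have h1 : tc < t := by
      by_contra hle
      push_neg at hle
      have := hd3.monotoneOn (Set.mem_Ici.2 ht.le) (Set.mem_Ici.2 htcpos.le) hle
      simp only [← hd2] at this
      linarith
    refine ⟨h1, ?_⟩
    rcases (parta t ht).1.lt_or_eq with h | h
    · exact h
    · exact absurd ((parta t ht).2.1 h.symm) h1.ne'

end
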